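/- If an ideal 𝒜 of finite structures of signature μ has the extension property, then 𝒜 is representable, i.e., there exists a relational structure 𝔄 with age(𝔄) = 𝒜. -/

import Mathlib

/-- A relational structure of signature `μ : I → ℕ`. -/
structure RelStruct {I : Type} (μ : I → ℕ) : Type 1 where
  carrier : Type
  rel : ∀ i, (Fin (μ i) → carrier) → Prop

namespace RelStruct

variable {I : Type} {μ : I → ℕ}

/-- `f` is an embedding of relational structures. -/
def IsEmbedding (A B : RelStruct μ) (f : A.carrier → B.carrier) : Prop :=
  Function.Injective f ∧ ∀ i (x : Fin (μ i) → A.carrier), A.rel i x ↔ B.rel i (f ∘ x)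

/-- `A` embeds into `B`. -/
def Embeds (A B : RelStruct μ) : Prop := ∃ f, IsEmbedding A B f

/-- The age of `A`: (the isomorphism-closed set of) all finite structures embeddable in `A`,
i.e. isomorphic to a substructure of `A` induced on a finite subset. -/
def age (A : RelStruct μ) : Set (RelStruct μ) :=
  {B | Finite B.carrier ∧ Embeds B A}

/-- An ideal in the poset of isomorphism types of finite structures, encoded as an
isomorphism-closed set of finite structures which is nonempty, downward closed under
embeddability, and up-directed. -/
def IsIdeal (𝒜 : Set (RelStruct μ)) : Prop :=
  𝒜.Nonempty ∧ (∀ B ∈ 𝒜, Finite B.carrier) ∧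
  (∀ B C : RelStruct μ, Finite B.carrier → Embeds B C → C ∈ 𝒜 → B ∈ 𝒜) ∧
  (∀ B ∈ 𝒜, ∀ C ∈ 𝒜, ∃ D ∈ 𝒜, Embeds B D ∧ Embeds C D)

/-- Isomorphism of relational structures. -/
def Iso (A B : RelStruct μ) : Prop :=
  ∃ f : A.carrier ≃ B.carrier,
    ∀ i (x : Fin (μ i) → A.carrier), A.rel i x ↔ B.rel i (⇑f ∘ x)

/-- The number of isomorphism types of members of `𝒜`. -/
noncomputable def numTypes (𝒜 : Set (RelStruct μ)) : Cardinal :=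
  Cardinal.mk (Quot (fun A B : 𝒜 => Iso A.1 B.1))

/-- A class of structures has the amalgamation property. -/
def AmalgamationProperty (𝒞 : Set (RelStruct μ)) : Prop :=
  ∀ A A₁ A₂, A ∈ 𝒞 → A₁ ∈ 𝒞 → A₂ ∈ 𝒞 →
    ∀ (f₁ : A.carrier → A₁.carrier) (f₂ : A.carrier → A₂.carrier),
      IsEmbedding A A₁ f₁ → IsEmbedding A A₂ f₂ →
      ∃ B ∈ 𝒞, ∃ (g₁ : A₁.carrier → B.carrier) (g₂ : A₂.carrier → B.carrier),
        IsEmbedding A₁ B g₁ ∧ IsEmbedding A₂ B g₂ ∧ g₁ ∘ f₁ = g₂ ∘ f₂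

end RelStruct

namespace RelStruct

variable {I : Type} {μ : I → ℕ}

/-! ### Basic lemmas on embeddings and isomorphisms -/

theorem Embeds.rfl (A : RelStruct μ) : Embeds A A :=
  ⟨id, fun _ _ h => h, fun _ _ => Iff.rfl⟩

theorem Embeds.trans {A B C : RelStruct μ} (h1 : Embeds A B) (h2 : Embeds B C) :
    Embeds A C := by
  obtain ⟨f, hf1, hf2⟩ := h1
  obtain ⟨g, hg1, hg2⟩ := h2
  exact ⟨g ∘ f, hg1.comp hf1, fun i x => (hf2 i x).trans (hg2 i (f ∘ x))⟩

theorem Iso.refl (A : RelStruct μ) : Iso A A := ⟨Equiv.refl _, fun _ _ => Iff.rfl⟩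

theorem Iso.symm {A B : RelStruct μ} (h : Iso A B) : Iso B A := by
  obtain ⟨f, hf⟩ := h
  refine ⟨f.symm, fun i x => ?_⟩
  have h1 := hf i (⇑f.symm ∘ x)
  have hx : ⇑f ∘ ⇑f.symm ∘ x = x := funext fun j => f.apply_symm_apply _
  rw [hx] at h1
  exact h1.symm

theorem Iso.trans {A B C : RelStruct μ} (h1 : Iso A B) (h2 : Iso B C) : Iso A C := by
  obtain ⟨f, hf⟩ := h1; obtain ⟨g, hg⟩ := h2
  exact ⟨f.trans g, fun i x => (hf i x).trans (hg i (⇑f ∘ x))⟩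

theorem Iso.embeds {A B : RelStruct μ} (h : Iso A B) : Embeds A B := by
  obtain ⟨f, hf⟩ := h
  exact ⟨f, f.injective, hf⟩

theorem age_mono {A B : RelStruct μ} (h : Embeds A B) : age A ⊆ age B :=
  fun _ hD => ⟨hD.1, hD.2.trans h⟩

theorem iso_of_mk_eq {𝒜 : Set (RelStruct μ)} {a b : ↥𝒜}
    (h : Quot.mk (fun A B : 𝒜 => Iso A.1 B.1) a = Quot.mk (fun A B : 𝒜 => Iso A.1 B.1) b) :
    Iso a.1 b.1 := by
  have he : Equivalence (fun A B : ↥𝒜 => Iso A.1 B.1) :=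
    ⟨fun x => Iso.refl _, Iso.symm, Iso.trans⟩
  exact he.eqvGen_iff.1 (Quot.eqvGen_exact h)

/-! ### Codes for finite structures -/

/-- A code for a finite structure on `Fin n`. -/
def Code (μ : I → ℕ) : Type := Σ n : ℕ, ∀ i, (Fin (μ i) → Fin n) → Prop

/-- The structure coded by a code. -/
def toStruct (c : Code μ) : RelStruct μ := ⟨Fin c.1, c.2⟩

theorem exists_code (A : RelStruct μ) (h : Finite A.carrier) :
    ∃ c : Code μ, Iso A (toStruct c) := by
  obtain ⟨n, ⟨e⟩⟩ := Finite.exists_equiv_fin A.carrier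
  refine ⟨⟨n, fun i x => A.rel i (⇑e.symm ∘ x)⟩, e, fun i x => ?_⟩
  show A.rel i x ↔ A.rel i (⇑e.symm ∘ ⇑e ∘ x)
  rw [show ⇑e.symm ∘ ⇑e ∘ x = x from funext fun j => e.symm_apply_apply _]

open Classical in
/-- Choice of a code for each isomorphism type in `𝒜`. -/
noncomputable def repFun (𝒜 : Set (RelStruct μ)) :
    Quot (fun A B : 𝒜 => Iso A.1 B.1) → Code μ := fun q =>
  if h : Finite q.out.1.carrier then (exists_code q.out.1 h).choose
  else ⟨0, fun _ _ => False⟩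

theorem repFun_spec {𝒜 : Set (RelStruct μ)} (hfin : ∀ B ∈ 𝒜, Finite B.carrier)
    (q : Quot (fun A B : 𝒜 => Iso A.1 B.1)) : Iso q.out.1 (toStruct (repFun 𝒜 q)) := by
  have h : Finite q.out.1.carrier := hfin _ q.out.2
  have e : repFun 𝒜 q = (exists_code q.out.1 h).choose := dif_pos h
  rw [e]
  exact (exists_code q.out.1 h).choose_spec

theorem repFun_inj {𝒜 : Set (RelStruct μ)} (hfin : ∀ B ∈ 𝒜, Finite B.carrier) :
    Function.Injective (repFun 𝒜) := fun q1 q2 h => by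
  have h1 := repFun_spec hfin q1
  have h2 := repFun_spec hfin q2
  rw [h] at h1
  have h3 : Iso q1.out.1 q2.out.1 := h1.trans h2.symm
  have h4 := Quot.sound (r := fun A B : 𝒜 => Iso A.1 B.1) h3
  rwa [Quot.out_eq, Quot.out_eq] at h4

/-- A set of codes representing every isomorphism type in `𝒜` exactly once. -/
def repSet (𝒜 : Set (RelStruct μ)) : Set (Code μ) := Set.range (repFun 𝒜)

theorem numTypes_eq {𝒜 : Set (RelStruct μ)} (hfin : ∀ B ∈ 𝒜, Finite B.carrier) :
    numTypes 𝒜 = Cardinal.lift.{1} (Cardinal.mk ↥(repSet 𝒜)) := by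
  have := Cardinal.mk_range_eq_of_injective (repFun_inj hfin)
  rw [numTypes, repSet]
  rw [this]
  simp

theorem toStruct_repFun_mem {𝒜 : Set (RelStruct μ)} (hfin : ∀ B ∈ 𝒜, Finite B.carrier)
    (hdc : ∀ B C : RelStruct μ, Finite B.carrier → Embeds B C → C ∈ 𝒜 → B ∈ 𝒜)
    (q : Quot (fun A B : 𝒜 => Iso A.1 B.1)) : toStruct (repFun 𝒜 q) ∈ 𝒜 := by
  refine hdc _ _ ?_ (repFun_spec hfin q).symm.embeds q.out.2
  exact inferInstanceAs (Finite (Fin _))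

theorem embeds_toStruct_repFun {𝒜 : Set (RelStruct μ)} (hfin : ∀ B ∈ 𝒜, Finite B.carrier)
    {B : RelStruct μ} (hB : B ∈ 𝒜) :
    Embeds B (toStruct (repFun 𝒜 (Quot.mk (fun A B : 𝒜 => Iso A.1 B.1) ⟨B, hB⟩))) := by
  set q := Quot.mk (fun A B : 𝒜 => Iso A.1 B.1) ⟨B, hB⟩ with hq
  have h0 : Iso q.out.1 B := iso_of_mk_eq (b := ⟨B, hB⟩) (by rw [Quot.out_eq])
  exact (h0.symm.trans (repFun_spec hfin q)).embeds

/-! ### Partial structures on a fixed ambient type -/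

/-- A structure on a subset of an ambient type `Ω`. -/
structure PS (Ω : Type) {I : Type} (μ : I → ℕ) : Type where
  dom : Set Ω
  rel : ∀ i, (Fin (μ i) → Ω) → Prop

variable {Ω : Type}

/-- The relational structure induced by a partial structure. -/
def PS.struct (P : PS Ω μ) : RelStruct μ :=
  ⟨↥P.dom, fun i y => P.rel i fun j => ↑(y j)⟩

/-- Extension order on partial structures. -/
def PS.le (P Q : PS Ω μ) : Prop :=
  P.dom ⊆ Q.dom ∧ ∀ i y, (∀ j, y j ∈ P.dom) → (P.rel i y ↔ Q.rel i y)

theorem PS.le_rfl (P : PS Ω μ) : PS.le P P := ⟨subset_rfl, fun _ _ _ => Iff.rfl⟩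

theorem PS.le_trans {P Q R : PS Ω μ} (h1 : PS.le P Q) (h2 : PS.le Q R) : PS.le P R :=
  ⟨h1.1.trans h2.1, fun i y hy =>
    (h1.2 i y hy).trans (h2.2 i y fun j => h1.1 (hy j))⟩

theorem embeds_of_psLe {P Q : PS Ω μ} (h : PS.le P Q) : Embeds P.struct Q.struct := by
  refine ⟨fun a => ⟨a.1, h.1 a.2⟩,
    fun a b hab => Subtype.ext (congrArg Subtype.val hab :),
    fun i y => ?_⟩
  exact h.2 i (fun j => (y j).1) fun j => (y j).2

/-- Union of a set of partial structures. -/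
def unionPS (s : Set (PS Ω μ)) : PS Ω μ where
  dom := ⋃ P ∈ s, P.dom
  rel := fun i y => ∃ P ∈ s, (∀ j, y j ∈ P.dom) ∧ P.rel i y

/-- A set of partial structures that is a chain under extension. -/
def IsChainPS (s : Set (PS Ω μ)) : Prop :=
  ∀ P ∈ s, ∀ Q ∈ s, PS.le P Q ∨ PS.le Q P

theorem le_unionPS {s : Set (PS Ω μ)} (hc : IsChainPS s) {P : PS Ω μ} (hP : P ∈ s) :
    PS.le P (unionPS s) := by
  refine ⟨Set.subset_biUnion_of_mem hP, fun i y hy => ?_⟩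
  constructor
  · intro h
    exact ⟨P, hP, hy, h⟩
  · rintro ⟨Q, hQ, hyQ, hrel⟩
    rcases hc P hP Q hQ with h | h
    · exact (h.2 i y hy).2 hrel
    · exact (h.2 i y hyQ).1 hrel

theorem finite_subset_chain {s : Set (PS Ω μ)} (hc : IsChainPS s) (hs : s.Nonempty)
    {t : Set Ω} (ht : t.Finite) (hsub : t ⊆ (unionPS s).dom) : ∃ P ∈ s, t ⊆ P.dom := by
  refine Set.Finite.induction_on
    (motive := fun t _ => t ⊆ (unionPS s).dom → ∃ P ∈ s, t ⊆ P.dom) t ht ?_ ?_ hsub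
  · exact fun _ => ⟨hs.choose, hs.choose_spec, Set.empty_subset _⟩
  · rintro a t hat htfin ih hsub'
    obtain ⟨P, hP, hPt⟩ := ih ((Set.subset_insert a t).trans hsub')
    have h2 : a ∈ (unionPS s).dom := hsub' (Set.mem_insert a t)
    simp only [unionPS, Set.mem_iUnion] at h2
    obtain ⟨Q, hQ, haQ⟩ := h2
    rcases hc P hP Q hQ with h | h
    · exact ⟨Q, hQ, Set.insert_subset haQ (hPt.trans h.1)⟩
    · exact ⟨P, hP, Set.insert_subset (h.1 haQ) hPt⟩

theorem mem_age_unionPS {s : Set (PS Ω μ)} (hc : IsChainPS s) (hs : s.Nonempty)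
    {B : RelStruct μ} (hBfin : Finite B.carrier) (hemb : Embeds B (unionPS s).struct) :
    ∃ P ∈ s, Embeds B P.struct := by
  obtain ⟨f, hinj, hrel⟩ := hemb
  haveI := hBfin
  have ht : (Set.range fun b => (f b).1).Finite := Set.finite_range _
  have hsub : (Set.range fun b => (f b).1) ⊆ (unionPS s).dom := by
    rintro _ ⟨b, rfl⟩
    exact (f b).2
  obtain ⟨P, hP, hPt⟩ := finite_subset_chain hc hs ht hsub
  refine ⟨P, hP, fun b => ⟨(f b).1, hPt ⟨b, rfl⟩⟩, ?_, fun i x => ?_⟩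
  · intro a b hab
    exact hinj (Subtype.ext (congrArg Subtype.val hab :))
  · have h1 := hrel i x
    have h2 := (le_unionPS hc hP).2 i (fun j => (f (x j)).1) fun j => hPt ⟨x j, rfl⟩
    exact h1.trans h2.symm

end RelStruct

namespace RelStruct

variable {I : Type} {μ : I → ℕ} {Ω : Type}

/-! ### Extending a partial structure -/

section Ext

variable (U : PS Ω μ) (C : RelStruct μ) (c : Code μ) (ω : ℕ → Ω)
  (e : (PS.struct U).carrier → C.carrier) (f : Fin c.1 → C.carrier)

/-- Graph of the correspondence between the extended domain and `C`. -/
def extG : Ω → C.carrier → Prop := fun p z =>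
  (∃ h : p ∈ U.dom, z = e ⟨p, h⟩) ∨
    (p ∉ U.dom ∧ ∃ k : Fin c.1, p = ω k ∧ f k ∉ Set.range e ∧ z = f k)

/-- The extension of `U` along the amalgam `C`. -/
def extPS : PS Ω μ where
  dom := U.dom ∪ {p | ∃ k : Fin c.1, f k ∉ Set.range e ∧ p = ω k}
  rel := fun i y =>
    ∃ z : Fin (μ i) → C.carrier, (∀ j, extG U C c ω e f (y j) (z j)) ∧ C.rel i z

variable {U C c ω e f}

theorem extG_fun (hω : Function.Injective ω) {p : Ω} {z z' : C.carrier}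
    (h1 : extG U C c ω e f p z) (h2 : extG U C c ω e f p z') : z = z' := by
  rcases h1 with ⟨h, rfl⟩ | ⟨hnd, k, rfl, hk, rfl⟩
  · rcases h2 with ⟨h', rfl⟩ | ⟨hnd', -⟩
    · rfl
    · exact absurd h hnd'
  · rcases h2 with ⟨h', -⟩ | ⟨-, k', hkk', -, rfl⟩
    · exact absurd h' hnd
    · rw [show k = k' from Fin.val_injective (hω hkk')]

theorem extG_inj (hinj : Function.Injective e) (hfinj : Function.Injective f)
    {p p' : Ω} {z : C.carrier}
    (h1 : extG U C c ω e f p z) (h2 : extG U C c ω e f p' z) : p = p' := by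
  rcases h1 with ⟨h, rfl⟩ | ⟨hnd, k, rfl, hk, rfl⟩
  · rcases h2 with ⟨h', he'⟩ | ⟨-, k', -, hk', hz'⟩
    · have h3 := hinj he'
      exact congrArg Subtype.val h3
    · exact absurd ⟨⟨p, h⟩, hz'⟩ hk'
  · rcases h2 with ⟨h', he'⟩ | ⟨-, k', hp', -, hz'⟩
    · exact absurd ⟨⟨p', h'⟩, he'.symm⟩ hk
    · rw [hp', hfinj hz']

theorem extG_total {p : Ω} (hωdom : ∀ k, ω k ∉ U.dom)
    (hp : p ∈ (extPS U C c ω e f).dom) : ∃ z, extG U C c ω e f p z := by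
  rcases hp with h | ⟨k, hk, rfl⟩
  · exact ⟨e ⟨p, h⟩, Or.inl ⟨h, rfl⟩⟩
  · exact ⟨f k, Or.inr ⟨hωdom k, k, rfl, hk, rfl⟩⟩

theorem le_extPS (he : IsEmbedding (PS.struct U) C e) : PS.le U (extPS U C c ω e f) := by
  refine ⟨Set.subset_union_left, fun i y hy => ?_⟩
  have h2 := he.2 i fun j => (⟨y j, hy j⟩ : ↥U.dom)
  constructor
  · intro h
    exact ⟨fun j => e ⟨y j, hy j⟩, fun j => Or.inl ⟨hy j, rfl⟩, h2.1 h⟩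
  · rintro ⟨z, hz, hrel⟩
    have hze : z = fun j => e ⟨y j, hy j⟩ := by
      funext j
      rcases hz j with ⟨h, hzj⟩ | ⟨hnd, -⟩
      · exact hzj
      · exact absurd (hy j) hnd
    rw [hze] at hrel
    exact h2.2 hrel

theorem embeds_toStruct_extPS (he : IsEmbedding (PS.struct U) C e)
    (hf : IsEmbedding (toStruct c) C f) (hω : Function.Injective ω)
    (hωdom : ∀ k, ω k ∉ U.dom) : Embeds (toStruct c) (PS.struct (extPS U C c ω e f)) := by
  classical
  have hch : ∀ k, ∃ q : ↥(extPS U C c ω e f).dom, extG U C c ω e f q.1 (f k) := by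
    intro k
    by_cases h : f k ∈ Set.range e
    · exact ⟨⟨(h.choose).1, Or.inl (h.choose).2⟩, Or.inl ⟨(h.choose).2, h.choose_spec.symm⟩⟩
    · exact ⟨⟨ω k, Or.inr ⟨k, h, rfl⟩⟩, Or.inr ⟨hωdom k, k, rfl, h, rfl⟩⟩
  have hGm : ∀ k, extG U C c ω e f ((hch k).choose : ↥(extPS U C c ω e f).dom).1 (f k) :=
    fun k => (hch k).choose_spec
  refine ⟨fun k => (hch k).choose, ?_, fun i x => ?_⟩
  · intro k k' hkk'
    have h2 : (hch k).choose = (hch k').choose := hkk'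
    have h1 := hGm k'
    rw [← h2] at h1
    exact hf.1 (extG_fun hω (hGm k) h1)
  · refine (hf.2 i x).trans ?_
    constructor
    · intro h
      exact ⟨fun j => f (x j), fun j => hGm (x j), h⟩

    · rintro ⟨z, hz, hrel⟩
      have hze : z = fun j => f (x j) := funext fun j => extG_fun hω (hz j) (hGm (x j))
      rw [hze] at hrel
      exact hrel

theorem embeds_extPS (he : IsEmbedding (PS.struct U) C e) (hfinj : Function.Injective f)
    (hω : Function.Injective ω) (hωdom : ∀ k, ω k ∉ U.dom) :
    Embeds (PS.struct (extPS U C c ω e f)) C := by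
  have h0 : ∀ p : ↥(extPS U C c ω e f).dom, ∃ z, extG U C c ω e f p.1 z :=
    fun p => extG_total hωdom p.2
  refine ⟨fun p => (h0 p).choose, ?_, fun i y => ?_⟩
  · intro p p' hpp'
    apply Subtype.ext
    have h2 : (h0 p).choose = (h0 p').choose := hpp'
    have h1 := (h0 p').choose_spec
    rw [← h2] at h1
    exact extG_inj he.1 hfinj (h0 p).choose_spec h1
  · constructor
    · rintro ⟨z, hz, hrel⟩
      have hze : (fun j => (h0 (y j)).choose) = z :=
        funext fun j => extG_fun hω ((h0 (y j)).choose_spec) (hz j)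
      show C.rel i fun j => (h0 (y j)).choose
      rw [hze]
      exact hrel
    · intro h
      exact ⟨fun j => (h0 (y j)).choose, fun j => (h0 (y j)).choose_spec, h⟩

theorem extPS_dom_subset : (extPS U C c ω e f).dom ⊆ U.dom ∪ Set.range ω := by
  rintro p (h | ⟨k, -, rfl⟩)
  · exact Or.inl h
  · exact Or.inr ⟨k, rfl⟩

theorem extPS_dom_finite (hU : U.dom.Finite) : (extPS U C c ω e f).dom.Finite := by
  refine hU.union (Set.Finite.subset (Set.finite_range fun k : Fin c.1 => ω k) ?_)
  rintro p ⟨k, -, rfl⟩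
  exact ⟨k, rfl⟩

end Ext

/-! ### Realizing a code as a partial structure -/

section Base

variable (c : Code μ) (ω : ℕ → Ω)

/-- A copy of the structure coded by `c` on the points `ω k`. -/
def basePS : PS Ω μ where
  dom := {p | ∃ k : Fin c.1, p = ω k}
  rel := fun i y =>
    ∃ z : Fin (μ i) → Fin c.1, (∀ j, y j = ω (z j)) ∧ c.2 i z

variable {c ω}

theorem embeds_toStruct_basePS (hω : Function.Injective ω) :
    Embeds (toStruct c) (PS.struct (basePS c ω)) := by
  refine ⟨fun k => ⟨ω (Fin.val k), k, rfl⟩, ?_, fun i x => ?_⟩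
  · intro k k' hkk'
    have h1 : ω (Fin.val k) = ω (Fin.val k') := congrArg Subtype.val hkk'
    exact Fin.val_injective (hω h1)
  · constructor
    · intro h
      exact ⟨x, fun j => rfl, h⟩
    · rintro ⟨z, hz, hrel⟩
      have hxz : x = z := by
        funext j
        have h1 : ω (Fin.val (x j)) = ω (Fin.val (z j)) := hz j
        exact Fin.val_injective (hω h1)
      rw [show (toStruct c).rel i x = c.2 i x from rfl, hxz]
      exact hrel

theorem embeds_basePS_toStruct (hω : Function.Injective ω) : Embeds (PS.struct (basePS c ω)) (toStruct c) := by
  classical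
  have h0 : ∀ p : ↥(basePS c ω).dom, ∃ k : Fin c.1, p.1 = ω k := fun p => p.2
  refine ⟨fun p => (h0 p).choose, ?_, fun i y => ?_⟩
  · intro p p' hpp'
    have h2 : (h0 p).choose = (h0 p').choose := hpp'
    apply Subtype.ext
    rw [(h0 p).choose_spec, (h0 p').choose_spec, h2]
  · constructor
    · rintro ⟨z, hz, hrel⟩
      have hze : (fun j => (h0 (y j)).choose) = z := by
        funext j
        have h3 : (y j).1 = ω (Fin.val (z j)) := hz j
        have h1 := (h0 (y j)).choose_spec
        exact Fin.val_injective (hω (h1.symm.trans h3))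
      show c.2 i fun j => (h0 (y j)).choose
      rw [hze]
      exact hrel
    · intro h
      refine ⟨fun j => (h0 (y j)).choose, fun j => (h0 (y j)).choose_spec, h⟩

theorem basePS_dom_finite : (basePS c ω).dom.Finite := by
  refine Set.Finite.subset (Set.finite_range fun k : Fin c.1 => ω k) ?_
  rintro p ⟨k, rfl⟩
  exact ⟨k, rfl⟩

end Base

end RelStruct

namespace RelStruct

variable {I : Type} {μ : I → ℕ}

/-! ### The recursive construction -/

open Classical in
/-- One step of the transfinite construction. -/
noncomputable def step (𝒜 : Set (RelStruct μ))
    (r : ↥(repSet 𝒜) → ↥(repSet 𝒜) → Prop) (x : ↥(repSet 𝒜))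
    (IH : ∀ y, r y x → PS (↥(repSet 𝒜) × ℕ) μ) : PS (↥(repSet 𝒜) × ℕ) μ :=
  if _hx : ∃ y, r y x then
    if hC : ∃ C : RelStruct μ, age C ⊆ 𝒜 ∧
        (∃ e, IsEmbedding (PS.struct (unionPS {P | ∃ y h, P = IH y h})) C e) ∧
        (∃ f, IsEmbedding (toStruct x.1) C f) then
      extPS (unionPS {P | ∃ y h, P = IH y h}) hC.choose x.1 (fun k => (x, k))
        hC.choose_spec.2.1.choose hC.choose_spec.2.2.choose
    else basePS x.1 fun k => (x, k)
  else basePS x.1 fun k => (x, k)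

/-- The invariants of the transfinite construction. -/
def Good (𝒜 : Set (RelStruct μ)) (r : ↥(repSet 𝒜) → ↥(repSet 𝒜) → Prop)
    (F : ↥(repSet 𝒜) → PS (↥(repSet 𝒜) × ℕ) μ) (x : ↥(repSet 𝒜)) : Prop :=
  (F x).dom ⊆ {p | p.1 = x ∨ r p.1 x} ∧
  (Finite {y // r y x} → (F x).dom.Finite) ∧
  (∀ y, r y x → PS.le (F y) (F x)) ∧
  age (PS.struct (F x)) ⊆ 𝒜 ∧
  Embeds (toStruct x.1) (PS.struct (F x))

open Cardinal in
theorem good_all (𝒜 : Set (RelStruct μ))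
    (hdc : ∀ B C : RelStruct μ, Finite B.carrier → Embeds B C → C ∈ 𝒜 → B ∈ 𝒜)
    (hmem : ∀ w : ↥(repSet 𝒜), toStruct w.1 ∈ 𝒜)
    (hextW : ∀ U : PS (↥(repSet 𝒜) × ℕ) μ,
      Cardinal.mk ↥U.dom < Cardinal.mk ↥(repSet 𝒜) → age (PS.struct U) ⊆ 𝒜 →
      ∀ B ∈ 𝒜, ∃ C : RelStruct μ, age C ⊆ 𝒜 ∧ Embeds (PS.struct U) C ∧ Embeds B C)
    (r : ↥(repSet 𝒜) → ↥(repSet 𝒜) → Prop) (wo : IsWellOrder ↥(repSet 𝒜) r)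
    (hord : Cardinal.ord (Cardinal.mk ↥(repSet 𝒜)) = Ordinal.type r)
    (hal : ℵ₀ ≤ Cardinal.mk ↥(repSet 𝒜))
    (F : ↥(repSet 𝒜) → PS (↥(repSet 𝒜) × ℕ) μ)
    (hF : ∀ x, F x = step 𝒜 r x fun y _ => F y) :
    ∀ x, Good 𝒜 r F x := by
  haveI := wo
  intro x0
  refine wo.toIsWellFounded.wf.induction (C := Good 𝒜 r F) x0 ?_
  intro x IH
  have hωinj : Function.Injective (fun k : ℕ => ((x, k) : ↥(repSet 𝒜) × ℕ)) := by
    intro a b hab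
    exact congrArg Prod.snd hab
  by_cases hx : ∃ y, r y x
  · -- successor/limit case
    have hchain : IsChainPS {P | ∃ y, ∃ _h : r y x, P = F y} := by
      rintro P ⟨y, hy, rfl⟩ Q ⟨z, hz, rfl⟩
      rcases trichotomous_of r y z with h | h | h
      · exact Or.inl ((IH z hz).2.2.1 y h)
      · subst h; exact Or.inl (PS.le_rfl _)
      · exact Or.inr ((IH y hy).2.2.1 z h)
    have hsne : Set.Nonempty {P | ∃ y, ∃ _h : r y x, P = F y} :=
      ⟨F hx.choose, hx.choose, hx.choose_spec, rfl⟩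
    have hUdom : (unionPS {P | ∃ y, ∃ _h : r y x, P = F y}).dom ⊆ {p | r p.1 x} := by
      intro p hp
      obtain ⟨D, hD, hpD⟩ : ∃ D ∈ {P | ∃ y, ∃ _h : r y x, P = F y}, p ∈ PS.dom D := by
        simpa [unionPS] using hp
      obtain ⟨y, hy, rfl⟩ := hD
      rcases (IH y hy).1 hpD with h | h
      · show r p.1 x
        rw [h]; exact hy
      · exact trans_of r h hy
    have hωdom : ∀ k : ℕ, ((x, k) : ↥(repSet 𝒜) × ℕ) ∉
        (unionPS {P | ∃ y, ∃ _h : r y x, P = F y}).dom :=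
      fun k hk => (irrefl_of r x) (hUdom hk)
    have hageU : age (PS.struct (unionPS {P | ∃ y, ∃ _h : r y x, P = F y})) ⊆ 𝒜 := by
      intro B hB
      obtain ⟨P, hP, hemb⟩ := mem_age_unionPS hchain hsne hB.1 hB.2
      obtain ⟨y, hy, rfl⟩ := hP
      exact (IH y hy).2.2.2.1 ⟨hB.1, hemb⟩
    have hUfin : Finite {y // r y x} →
        (unionPS {P | ∃ y, ∃ _h : r y x, P = F y}).dom.Finite := by
      intro hfin
      refine Set.Finite.biUnion ?_ ?_
      · have hs : {P | ∃ y, ∃ _h : r y x, P = F y} = Set.range fun y : {y // r y x} => F y.1 := by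
          ext P
          constructor
          · rintro ⟨y, hy, rfl⟩; exact ⟨⟨y, hy⟩, rfl⟩
          · rintro ⟨⟨y, hy⟩, rfl⟩; exact ⟨y, hy, rfl⟩
        rw [hs]
        exact Set.finite_range _
      · rintro P ⟨y, hy, rfl⟩
        refine (IH y hy).2.1 ?_
        refine Finite.of_injective
          (fun z : {z // r z y} => (⟨z.1, trans_of r z.2 hy⟩ : {z // r z x})) ?_
        intro a b hab
        have h5 := congrArg Subtype.val hab
        exact Subtype.ext h5
    have hcard : Cardinal.mk ↥(unionPS {P | ∃ y, ∃ _h : r y x, P = F y}).dom <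
        Cardinal.mk ↥(repSet 𝒜) := by
      by_cases hfin : Finite {y // r y x}
      · exact lt_of_lt_of_le (Cardinal.lt_aleph0_iff_set_finite.2 (hUfin hfin)) hal
      · have h2 : ℵ₀ ≤ Cardinal.mk {y // r y x} :=
          Cardinal.infinite_iff.1 (not_finite_iff_infinite.1 hfin)
        have h3 : Cardinal.mk {y // r y x} < Cardinal.mk ↥(repSet 𝒜) := by
          rw [← Ordinal.card_typein (r := r)]
          exact Cardinal.card_typein_lt (r := r) x hord
        have h4 : Cardinal.mk ↥(unionPS {P | ∃ y, ∃ _h : r y x, P = F y}).dom ≤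
            Cardinal.mk ({y // r y x} × ℕ) := by
          refine Cardinal.mk_le_of_injective
            (f := fun p : ↥(unionPS {P | ∃ y, ∃ _h : r y x, P = F y}).dom =>
              ((⟨p.1.1, hUdom p.2⟩ : {y // r y x}), p.1.2)) ?_
          intro a b hab
          apply Subtype.ext
          have h6 : a.1.1 = b.1.1 := congrArg (fun q => q.1.1) hab
          have h7 : a.1.2 = b.1.2 := congrArg (fun q => q.2) hab
          exact Prod.ext h6 h7
        have h8 : Cardinal.mk ({y // r y x} × ℕ) ≤
            max (max (Cardinal.mk {y // r y x}) ℵ₀) ℵ₀ := by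
          rw [Cardinal.mk_prod, Cardinal.lift_id, Cardinal.mk_nat, Cardinal.lift_id]
          exact Cardinal.mul_le_max _ _
        have h9 : ℵ₀ < Cardinal.mk ↥(repSet 𝒜) := lt_of_le_of_lt h2 h3
        exact lt_of_le_of_lt (h4.trans h8) (max_lt (max_lt h3 h9) h9)
    have hC : ∃ C : RelStruct μ, age C ⊆ 𝒜 ∧
        (∃ e, IsEmbedding (PS.struct (unionPS
          {P | ∃ y, ∃ _h : r y x, P = F y})) C e) ∧
        (∃ f, IsEmbedding (toStruct x.1) C f) := by
      obtain ⟨C, h1, h2, h3⟩ := hextW _ hcard hageU (toStruct x.1) (hmem x)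
      exact ⟨C, h1, h2, h3⟩
    have hFx : F x = extPS (unionPS {P | ∃ y, ∃ _h : r y x, P = F y}) hC.choose x.1
        (fun k => (x, k)) hC.choose_spec.2.1.choose hC.choose_spec.2.2.choose := by
      rw [hF x]
      simp only [step]
      rw [dif_pos hx, dif_pos hC]
    have hce : IsEmbedding (PS.struct (unionPS {P | ∃ y, ∃ _h : r y x, P = F y}))
        hC.choose hC.choose_spec.2.1.choose := hC.choose_spec.2.1.choose_spec
    have hcf : IsEmbedding (toStruct x.1) hC.choose hC.choose_spec.2.2.choose :=
      hC.choose_spec.2.2.choose_spec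
    refine ⟨?_, ?_, ?_, ?_, ?_⟩
    · rw [hFx]
      intro p hp
      rcases extPS_dom_subset hp with h | ⟨k, rfl⟩
      · exact Or.inr (hUdom h)
      · exact Or.inl rfl
    · intro hfin
      rw [hFx]
      exact extPS_dom_finite (hUfin hfin)
    · intro y hy
      rw [hFx]
      exact PS.le_trans (le_unionPS hchain ⟨y, hy, rfl⟩) (le_extPS hce)
    · rw [hFx]
      intro B hB
      exact hC.choose_spec.1 (age_mono (embeds_extPS hce hcf.1 hωinj hωdom) hB)
    · rw [hFx]
      exact embeds_toStruct_extPS hce hcf hωinj hωdom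
  · -- minimal case
    have hFx : F x = basePS x.1 fun k => (x, k) := by
      rw [hF x]
      simp only [step]
      rw [dif_neg hx]
    refine ⟨?_, ?_, ?_, ?_, ?_⟩
    · rw [hFx]
      rintro p ⟨k, rfl⟩
      exact Or.inl rfl
    · intro _
      rw [hFx]
      exact basePS_dom_finite
    · intro y hy
      exact absurd ⟨y, hy⟩ hx
    · rw [hFx]
      intro B hB
      exact hdc B (toStruct x.1) hB.1 (hB.2.trans (embeds_basePS_toStruct hωinj)) (hmem x)
    · rw [hFx]
      exact embeds_toStruct_basePS hωinj

end RelStruct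

namespace RelStruct

variable {I : Type} {μ : I → ℕ}

theorem exists_upper {𝒜 : Set (RelStruct μ)} (hne : 𝒜.Nonempty)
    (hdir : ∀ B ∈ 𝒜, ∀ C ∈ 𝒜, ∃ D ∈ 𝒜, Embeds B D ∧ Embeds C D)
    {s : Set (RelStruct μ)} (hs : s.Finite) (hsub : s ⊆ 𝒜) :
    ∃ D ∈ 𝒜, ∀ B ∈ s, Embeds B D := by
  refine Set.Finite.induction_on
    (motive := fun s _ => s ⊆ 𝒜 → ∃ D ∈ 𝒜, ∀ B ∈ s, Embeds B D) s hs ?_ ?_ hsub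
  · intro _
    obtain ⟨D, hD⟩ := hne
    exact ⟨D, hD, fun B hB => absurd hB (Set.notMem_empty B)⟩
  · rintro A s hA hsfin ih hsub'
    obtain ⟨D, hD, hDub⟩ := ih fun B hB => hsub' (Set.mem_insert_of_mem _ hB)
    obtain ⟨D', hD', hAD', hDD'⟩ := hdir A (hsub' (Set.mem_insert _ _)) D hD
    refine ⟨D', hD', ?_⟩
    rintro B (rfl | hB)
    · exact hAD'
    · exact (hDub B hB).trans hDD'

end RelStruct


open RelStruct in
/-- If an ideal `𝒜` of finite structures of signature `μ` has the extension property,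
then `𝒜` is representable: there is a relational structure whose age equals `𝒜`. -/
theorem representable_of_extensionProperty {I : Type} {μ : I → ℕ}
    (𝒜 : Set (RelStruct μ)) (h𝒜 : IsIdeal 𝒜)
    (hext : ∀ A : RelStruct μ,
      Cardinal.lift.{1} (Cardinal.mk A.carrier) < numTypes 𝒜 → age A ⊆ 𝒜 →
      ∀ B ∈ 𝒜, ∃ C : RelStruct μ, age C ⊆ 𝒜 ∧ Embeds A C ∧ Embeds B C) :
    ∃ A : RelStruct μ, age A = 𝒜 := by
  obtain ⟨hne, hfin, hdc, hdir⟩ := h𝒜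
  by_cases hinf : Cardinal.aleph0 ≤ Cardinal.mk ↥(repSet 𝒜)
  · -- infinitely many isomorphism types
    obtain ⟨r, wo, hord⟩ := Cardinal.ord_eq ↥(repSet 𝒜)
    obtain ⟨F, hF⟩ : ∃ F : ↥(repSet 𝒜) → PS (↥(repSet 𝒜) × ℕ) μ,
        ∀ x, F x = step 𝒜 r x fun y _ => F y :=
      ⟨wo.toIsWellFounded.wf.fix (step 𝒜 r),
        fun x => wo.toIsWellFounded.wf.fix_eq (step 𝒜 r) x⟩
    have hmem : ∀ w : ↥(repSet 𝒜), toStruct w.1 ∈ 𝒜 := by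
      intro w
      obtain ⟨q, hq⟩ := w.2
      rw [← hq]
      exact toStruct_repFun_mem hfin hdc q
    have hextW : ∀ U : PS (↥(repSet 𝒜) × ℕ) μ,
        Cardinal.mk ↥U.dom < Cardinal.mk ↥(repSet 𝒜) → age (PS.struct U) ⊆ 𝒜 →
        ∀ B ∈ 𝒜, ∃ C : RelStruct μ, age C ⊆ 𝒜 ∧ Embeds (PS.struct U) C ∧ Embeds B C := by
      intro U hU hage B hB
      refine hext (PS.struct U) ?_ hage B hB
      rw [numTypes_eq hfin]
      exact Cardinal.lift_lt.2 hU
    have good := good_all 𝒜 hdc hmem hextW r wo hord hinf F hF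
    haveI := wo
    have hchain : IsChainPS (Set.range F) := by
      rintro P ⟨y, rfl⟩ Q ⟨z, rfl⟩
      rcases trichotomous_of r y z with h | h | h
      · exact Or.inl ((good z).2.2.1 y h)
      · subst h
        exact Or.inl (PS.le_rfl _)
      · exact Or.inr ((good y).2.2.1 z h)
    haveI hWne : Nonempty ↥(repSet 𝒜) := by
      have h0 : 0 < Cardinal.mk ↥(repSet 𝒜) := lt_of_lt_of_le Cardinal.aleph0_pos hinf
      exact Cardinal.mk_ne_zero_iff.1 h0.ne'
    have hsne : (Set.range F).Nonempty := Set.range_nonempty F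
    refine ⟨PS.struct (unionPS (Set.range F)), ?_⟩
    apply Set.Subset.antisymm
    · intro B hB
      obtain ⟨P, hP, hemb⟩ := mem_age_unionPS hchain hsne hB.1 hB.2
      obtain ⟨y, rfl⟩ := hP
      exact (good y).2.2.2.1 ⟨hB.1, hemb⟩
    · intro B hB
      refine ⟨hfin B hB, ?_⟩
      have h1 := embeds_toStruct_repFun hfin hB
      have hw : repFun 𝒜 (Quot.mk (fun A B : 𝒜 => Iso A.1 B.1) ⟨B, hB⟩) ∈ repSet 𝒜 :=
        ⟨Quot.mk (fun A B : 𝒜 => Iso A.1 B.1) ⟨B, hB⟩, rfl⟩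
      have h2 : Embeds (toStruct (⟨_, hw⟩ : ↥(repSet 𝒜)).1) (PS.struct (F ⟨_, hw⟩)) :=
        (good ⟨_, hw⟩).2.2.2.2
      have h3 : Embeds (PS.struct (F ⟨_, hw⟩)) (PS.struct (unionPS (Set.range F))) :=
        embeds_of_psLe (le_unionPS hchain ⟨⟨_, hw⟩, rfl⟩)
      exact (h1.trans h2).trans h3
  · -- finitely many isomorphism types
    haveI hW : Finite ↥(repSet 𝒜) := Cardinal.lt_aleph0_iff_finite.1 (not_le.1 hinf)
    have hssub : Set.range (fun w : ↥(repSet 𝒜) => toStruct w.1) ⊆ 𝒜 := by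
      rintro _ ⟨w, rfl⟩
      show toStruct w.1 ∈ 𝒜
      obtain ⟨q, hq⟩ := w.2
      rw [← hq]
      exact toStruct_repFun_mem hfin hdc q
    obtain ⟨D, hD, hDub⟩ := exists_upper hne hdir (Set.finite_range _) hssub
    refine ⟨D, Set.Subset.antisymm ?_ ?_⟩
    · intro B hB
      exact hdc B D hB.1 hB.2 hD
    · intro B hB
      refine ⟨hfin B hB, ?_⟩
      have h1 := embeds_toStruct_repFun hfin hB
      have hw : repFun 𝒜 (Quot.mk (fun A B : 𝒜 => Iso A.1 B.1) ⟨B, hB⟩) ∈ repSet 𝒜 :=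
        ⟨Quot.mk (fun A B : 𝒜 => Iso A.1 B.1) ⟨B, hB⟩, rfl⟩
      exact h1.trans (hDub _ ⟨⟨_, hw⟩, rfl⟩)
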